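/- Fix an integer d ≥ 1 and let R_d ⊂ ℂ[X,Y,Z] be the ℂ-linear span of the monomials X^a Y^b Z^{3d−a−b} with 0 ≤ a ≤ 2d, 0 ≤ b ≤ 2d and a + b ≤ 3d. Then a polynomial f ∈ R_d satisfies f(X + αZ, Y + βZ, Z) − f(X, Y, Z) ∈ ℂ·Z^{3d} for all α, β ∈ ℂ if and only if f lies in the ℂ-linear span of the three monomials X Z^{3d−1}, Y Z^{3d−1}, Z^{3d}. -/

import Mathlib

open MvPolynomial

/-- `R_d ⊂ ℂ[X,Y,Z]`: the span of the monomials `X^a Y^b Z^(3d-a-b)` with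
`0 ≤ a, b ≤ 2d` and `a + b ≤ 3d`.  (Variables: `X = X 0`, `Y = X 1`, `Z = X 2`.) -/
noncomputable def Rd (d : ℕ) : Submodule ℂ (MvPolynomial (Fin 3) ℂ) :=
  Submodule.span ℂ
    {m | ∃ a b : ℕ, a ≤ 2 * d ∧ b ≤ 2 * d ∧ a + b ≤ 3 * d ∧
      m = X 0 ^ a * X 1 ^ b * X 2 ^ (3 * d - a - b)}

/-- The `ℂ`-algebra endomorphism of `ℂ[X,Y,Z]` sending `X ↦ X + αZ`, `Y ↦ Y + βZ`,
`Z ↦ Z`: the action of `(α, β)` in the unipotent radical of `Aut(S)`. -/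
noncomputable def unipAction (α β : ℂ) :
    MvPolynomial (Fin 3) ℂ →ₐ[ℂ] MvPolynomial (Fin 3) ℂ :=
  aeval ![X 0 + C α * X 2, X 1 + C β * X 2, X 2]

noncomputable def ev (a b e : ℕ) : Fin 3 →₀ ℕ :=
  Finsupp.single 0 a + Finsupp.single 1 b + Finsupp.single 2 e

lemma ev_inj {a b e a' b' e' : ℕ} : ev a b e = ev a' b' e' ↔ a = a' ∧ b = b' ∧ e = e' := by
  constructor
  · intro h
    have h0 : ev a b e 0 = ev a' b' e' 0 := by rw [h]
    have h1 : ev a b e 1 = ev a' b' e' 1 := by rw [h]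
    have h2 : ev a b e 2 = ev a' b' e' 2 := by rw [h]
    simp [ev, Finsupp.single_apply] at h0 h1 h2
    exact ⟨h0, h1, h2⟩
  · rintro ⟨rfl, rfl, rfl⟩; rfl

lemma monomial_ev (a b e : ℕ) (c : ℂ) :
    (monomial (ev a b e) c : MvPolynomial (Fin 3) ℂ) = C c * X 0 ^ a * X 1 ^ b * X 2 ^ e := by
  rw [ev, X_pow_eq_monomial, X_pow_eq_monomial, X_pow_eq_monomial, C_apply,
    monomial_mul, monomial_mul, monomial_mul]
  simp

noncomputable def suppSub (T : Set (Fin 3 →₀ ℕ)) : Submodule ℂ (MvPolynomial (Fin 3) ℂ) where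
  carrier := {f | ∀ m, coeff m f ≠ 0 → m ∈ T}
  add_mem' := by
    intro a b ha hb m hm
    rw [coeff_add] at hm
    by_cases h : coeff m a = 0
    · exact hb m (by simpa [h] using hm)
    · exact ha m h
  zero_mem' := by intro m hm; simp at hm
  smul_mem' := by
    intro c x hx m hm
    rw [coeff_smul] at hm
    exact hx m (right_ne_zero_of_mul hm)

lemma supp_Rd {d : ℕ} {f : MvPolynomial (Fin 3) ℂ} (hf : f ∈ Rd d) :
    ∀ m, coeff m f ≠ 0 → ∃ a b e, a + b + e = 3 * d ∧ m = ev a b e := by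
  have key : Rd d ≤ suppSub {m | ∃ a b e, a + b + e = 3 * d ∧ m = ev a b e} := by
    rw [Rd, Submodule.span_le]
    rintro g ⟨a, b, ha, hb, hab, rfl⟩ m hm
    have hg : (X 0 ^ a * X 1 ^ b * X 2 ^ (3 * d - a - b) : MvPolynomial (Fin 3) ℂ)
        = monomial (ev a b (3 * d - a - b)) 1 := by rw [monomial_ev]; simp
    rw [hg, coeff_monomial] at hm
    split_ifs at hm with h
    · exact ⟨a, b, 3 * d - a - b, by omega, h.symm⟩
    · exact absurd rfl hm
  exact key hf

lemma coeff_unipX {d : ℕ} {f : MvPolynomial (Fin 3) ℂ} (hf : f ∈ Rd d)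
    (a' b' : ℕ) (α : ℂ) :
    coeff (ev a' b' (3 * d - a' - b')) (unipAction α 0 f) =
    ∑ a ∈ Finset.range (3 * d + 1),
      coeff (ev a b' (3 * d - a - b')) f * (a.choose a' : ℂ) * α ^ (a - a') := by
  have key : Rd d ≤
      { carrier := {f | ∀ a' b' : ℕ, ∀ α : ℂ,
          coeff (ev a' b' (3 * d - a' - b')) (unipAction α 0 f) =
          ∑ a ∈ Finset.range (3 * d + 1),
            coeff (ev a b' (3 * d - a - b')) f * (a.choose a' : ℂ) * α ^ (a - a')}
        add_mem' := by
          intro p q hp hq a' b' α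
          simp only [map_add, coeff_add, hp a' b' α, hq a' b' α, add_mul,
            Finset.sum_add_distrib]
        zero_mem' := by simp
        smul_mem' := by
          intro c p hp a' b' α
          simp only [map_smul, coeff_smul, smul_eq_mul, hp a' b' α, Finset.mul_sum]
          ring_nf
          exact Finset.sum_congr rfl fun x _ => by ring
      } := by
    rw [Rd, Submodule.span_le]
    rintro g ⟨a, b, ha2, hb2, hab, rfl⟩
    intro a' b' α
    have hg : (X 0 ^ a * X 1 ^ b * X 2 ^ (3 * d - a - b) : MvPolynomial (Fin 3) ℂ)
        = monomial (ev a b (3 * d - a - b)) 1 := by rw [monomial_ev]; simp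
    have hRHS : ∑ a'' ∈ Finset.range (3 * d + 1),
        coeff (ev a'' b' (3 * d - a'' - b'))
          (X 0 ^ a * X 1 ^ b * X 2 ^ (3 * d - a - b) : MvPolynomial (Fin 3) ℂ)
          * (a''.choose a' : ℂ) * α ^ (a'' - a')
        = if b = b' then (a.choose a' : ℂ) * α ^ (a - a') else 0 := by
      rw [hg]
      by_cases hb : b = b'
      · subst hb
        rw [if_pos rfl, Finset.sum_eq_single_of_mem a (Finset.mem_range.2 (by omega))]
        · rw [coeff_monomial, if_pos (ev_inj.2 ⟨rfl, rfl, rfl⟩)]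
          ring
        · intro i hi hne
          rw [coeff_monomial, if_neg (fun hc => hne (ev_inj.1 hc).1.symm), zero_mul, zero_mul]
      · rw [if_neg hb]
        apply Finset.sum_eq_zero
        intro i hi
        rw [coeff_monomial, if_neg (fun hc => hb (ev_inj.1 hc).2.1), zero_mul, zero_mul]
    rw [hRHS]
    have hunip : unipAction α 0
          (X 0 ^ a * X 1 ^ b * X 2 ^ (3 * d - a - b) : MvPolynomial (Fin 3) ℂ)
        = (X 0 + C α * X 2) ^ a * X 1 ^ b * X 2 ^ (3 * d - a - b) := by
      simp [unipAction]
    rw [hunip, add_pow, Finset.sum_mul, Finset.sum_mul]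
    have hterm : ∀ i ∈ Finset.range (a + 1),
        (X 0 ^ i * (C α * X 2) ^ (a - i) * (↑(a.choose i) : MvPolynomial (Fin 3) ℂ))
          * X 1 ^ b * X 2 ^ (3 * d - a - b)
        = monomial (ev i b ((3 * d - a - b) + (a - i))) (α ^ (a - i) * (a.choose i : ℂ)) := by
      intro i hi
      rw [monomial_ev]
      simp only [map_mul, map_pow, mul_pow, pow_add, map_natCast]
      ring
    rw [Finset.sum_congr rfl hterm]
    simp only [coeff_sum, coeff_monomial]
    by_cases hb : b = b'
    · subst hb
      rw [if_pos rfl]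
      by_cases ha' : a' ≤ a
      · rw [Finset.sum_eq_single_of_mem a' (Finset.mem_range.2 (by omega))]
        · rw [if_pos (ev_inj.2 ⟨rfl, rfl, by omega⟩)]
          ring
        · intro i hi hne
          rw [if_neg (fun hc => hne (ev_inj.1 hc).1)]
      · rw [Nat.choose_eq_zero_of_lt (by omega)]
        push_cast
        rw [zero_mul]
        apply Finset.sum_eq_zero
        intro i hi
        have hi' : i ≤ a := by simpa [Nat.lt_succ_iff] using hi
        rw [if_neg]
        intro hc
        have := (ev_inj.1 hc).1
        omega
    · rw [if_neg hb]
      apply Finset.sum_eq_zero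
      intro i hi
      rw [if_neg (fun hc => hb (ev_inj.1 hc).2.1)]
  exact key hf a' b' α

lemma coeff_unipY {d : ℕ} {f : MvPolynomial (Fin 3) ℂ} (hf : f ∈ Rd d)
    (a' b' : ℕ) (β : ℂ) :
    coeff (ev a' b' (3 * d - a' - b')) (unipAction 0 β f) =
    ∑ b ∈ Finset.range (3 * d + 1),
      coeff (ev a' b (3 * d - a' - b)) f * (b.choose b' : ℂ) * β ^ (b - b') := by
  have key : Rd d ≤
      { carrier := {f | ∀ a' b' : ℕ, ∀ β : ℂ,
          coeff (ev a' b' (3 * d - a' - b')) (unipAction 0 β f) =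
          ∑ b ∈ Finset.range (3 * d + 1),
            coeff (ev a' b (3 * d - a' - b)) f * (b.choose b' : ℂ) * β ^ (b - b')}
        add_mem' := by
          intro p q hp hq a' b' β
          simp only [map_add, coeff_add, hp a' b' β, hq a' b' β, add_mul,
            Finset.sum_add_distrib]
        zero_mem' := by simp
        smul_mem' := by
          intro c p hp a' b' β
          simp only [map_smul, coeff_smul, smul_eq_mul, hp a' b' β, Finset.mul_sum]
          ring_nf
          exact Finset.sum_congr rfl fun x _ => by ring
      } := by
    rw [Rd, Submodule.span_le]
    rintro g ⟨a, b, ha2, hb2, hab, rfl⟩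
    intro a' b' β
    have hg : (X 0 ^ a * X 1 ^ b * X 2 ^ (3 * d - a - b) : MvPolynomial (Fin 3) ℂ)
        = monomial (ev a b (3 * d - a - b)) 1 := by rw [monomial_ev]; simp
    have hRHS : ∑ b'' ∈ Finset.range (3 * d + 1),
        coeff (ev a' b'' (3 * d - a' - b''))
          (X 0 ^ a * X 1 ^ b * X 2 ^ (3 * d - a - b) : MvPolynomial (Fin 3) ℂ)
          * (b''.choose b' : ℂ) * β ^ (b'' - b')
        = if a = a' then (b.choose b' : ℂ) * β ^ (b - b') else 0 := by
      rw [hg]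
      by_cases ha : a = a'
      · subst ha
        rw [if_pos rfl, Finset.sum_eq_single_of_mem b (Finset.mem_range.2 (by omega))]
        · rw [coeff_monomial, if_pos (ev_inj.2 ⟨rfl, rfl, by omega⟩)]
          ring
        · intro i hi hne
          rw [coeff_monomial, if_neg (fun hc => hne (ev_inj.1 hc).2.1.symm), zero_mul, zero_mul]
      · rw [if_neg ha]
        apply Finset.sum_eq_zero
        intro i hi
        rw [coeff_monomial, if_neg (fun hc => ha (ev_inj.1 hc).1), zero_mul, zero_mul]
    rw [hRHS]
    have hunip : unipAction 0 β
          (X 0 ^ a * X 1 ^ b * X 2 ^ (3 * d - a - b) : MvPolynomial (Fin 3) ℂ)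
        = X 0 ^ a * (X 1 + C β * X 2) ^ b * X 2 ^ (3 * d - a - b) := by
      simp [unipAction]
    rw [hunip, add_pow, Finset.mul_sum, Finset.sum_mul]
    have hterm : ∀ j ∈ Finset.range (b + 1),
        X 0 ^ a * (X 1 ^ j * (C β * X 2) ^ (b - j) * (↑(b.choose j) : MvPolynomial (Fin 3) ℂ))
          * X 2 ^ (3 * d - a - b)
        = monomial (ev a j ((3 * d - a - b) + (b - j))) (β ^ (b - j) * (b.choose j : ℂ)) := by
      intro j hj
      rw [monomial_ev]
      simp only [map_mul, map_pow, mul_pow, pow_add, map_natCast]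
      ring
    rw [Finset.sum_congr rfl hterm]
    simp only [coeff_sum, coeff_monomial]
    by_cases ha : a = a'
    · subst ha
      rw [if_pos rfl]
      by_cases hb' : b' ≤ b
      · rw [Finset.sum_eq_single_of_mem b' (Finset.mem_range.2 (by omega))]
        · rw [if_pos (ev_inj.2 ⟨rfl, rfl, by omega⟩)]
          ring
        · intro i hi hne
          rw [if_neg (fun hc => hne (ev_inj.1 hc).2.1)]
      · rw [Nat.choose_eq_zero_of_lt (by omega)]
        push_cast
        rw [zero_mul]
        apply Finset.sum_eq_zero
        intro i hi
        have hi' : i ≤ b := by simpa [Nat.lt_succ_iff] using hi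
        rw [if_neg]
        intro hc
        have := (ev_inj.1 hc).2.1
        omega
    · rw [if_neg ha]
      apply Finset.sum_eq_zero
      intro i hi
      rw [if_neg (fun hc => ha (ev_inj.1 hc).1)]
  exact key hf a' b' β

lemma poly_extract (N a' : ℕ) (c : ℕ → ℂ)
    (h : ∀ α : ℂ, ∑ a ∈ Finset.range (N + 1), c a * (a.choose a' : ℂ) * α ^ (a - a') = c a') :
    ∀ a, a' < a → a ≤ N → c a = 0 := by
  intro a haa haN
  set P : Polynomial ℂ :=
    ∑ i ∈ Finset.range (N + 1), Polynomial.C (c i * (i.choose a' : ℂ)) * Polynomial.X ^ (i - a')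
    with hP
  have heval : ∀ α : ℂ, P.eval α = c a' := by
    intro α
    rw [hP]
    simp only [Polynomial.eval_finset_sum, Polynomial.eval_mul, Polynomial.eval_C,
      Polynomial.eval_pow, Polynomial.eval_X]
    exact h α
  have hPC : P = Polynomial.C (c a') := by
    apply Polynomial.funext
    intro r
    rw [heval r, Polynomial.eval_C]
  have hcoeff : P.coeff (a - a') = c a * (a.choose a' : ℂ) := by
    rw [hP, Polynomial.finset_sum_coeff]
    rw [Finset.sum_eq_single_of_mem a (Finset.mem_range.2 (by omega))]
    · rw [Polynomial.coeff_C_mul, Polynomial.coeff_X_pow, if_pos rfl, mul_one]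
    · intro i hi hne
      rw [Polynomial.coeff_C_mul, Polynomial.coeff_X_pow, if_neg (by omega), mul_zero]
  rw [hPC, Polynomial.coeff_C, if_neg (by omega)] at hcoeff
  have hch : (a.choose a' : ℂ) ≠ 0 := by
    exact_mod_cast Nat.cast_ne_zero.2 (Nat.choose_pos (by omega)).ne'
  exact (mul_eq_zero.1 hcoeff.symm).resolve_right hch

lemma Xpow_eq (d : ℕ) : (X 2 ^ (3 * d) : MvPolynomial (Fin 3) ℂ)
    = monomial (ev 0 0 (3 * d)) 1 := by
  rw [monomial_ev]; simp

lemma vanish {d : ℕ} {f : MvPolynomial (Fin 3) ℂ} (hf : f ∈ Rd d)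
    (H : ∀ α β : ℂ, ∃ c : ℂ, unipAction α β f - f = c • X 2 ^ (3 * d)) :
    ∀ a b e : ℕ, a + b + e = 3 * d → 2 ≤ a + b → coeff (ev a b e) f = 0 := by
  have hX : ∀ a' b' : ℕ, (a' ≠ 0 ∨ b' ≠ 0) → ∀ a, a' < a → a ≤ 3 * d →
      coeff (ev a b' (3 * d - a - b')) f = 0 := by
    intro a' b' hnz a haa haN
    refine poly_extract (3 * d) a' (fun a => coeff (ev a b' (3 * d - a - b')) f) ?_ a haa haN
    intro α
    obtain ⟨c, hc⟩ := H α 0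
    have h2 : coeff (ev a' b' (3 * d - a' - b')) (unipAction α 0 f)
        = coeff (ev a' b' (3 * d - a' - b')) f := by
      have hc' := congrArg (coeff (ev a' b' (3 * d - a' - b'))) hc
      rw [coeff_sub, coeff_smul, Xpow_eq, coeff_monomial,
        if_neg (fun hcond => by have := ev_inj.1 hcond; omega)] at hc'
      simp only [smul_eq_mul, mul_zero] at hc'
      exact sub_eq_zero.1 hc'
    rw [← coeff_unipX hf a' b' α, h2]
  have hY : ∀ a' b' : ℕ, (a' ≠ 0 ∨ b' ≠ 0) → ∀ b, b' < b → b ≤ 3 * d →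
      coeff (ev a' b (3 * d - a' - b)) f = 0 := by
    intro a' b' hnz b hbb hbN
    refine poly_extract (3 * d) b' (fun b => coeff (ev a' b (3 * d - a' - b)) f) ?_ b hbb hbN
    intro β
    obtain ⟨c, hc⟩ := H 0 β
    have h2 : coeff (ev a' b' (3 * d - a' - b')) (unipAction 0 β f)
        = coeff (ev a' b' (3 * d - a' - b')) f := by
      have hc' := congrArg (coeff (ev a' b' (3 * d - a' - b'))) hc
      rw [coeff_sub, coeff_smul, Xpow_eq, coeff_monomial,
        if_neg (fun hcond => by have := ev_inj.1 hcond; omega)] at hc'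
      simp only [smul_eq_mul, mul_zero] at hc'
      exact sub_eq_zero.1 hc'
    rw [← coeff_unipY hf a' b' β, h2]
  intro a b e hsum hge2
  have he : ∀ x y : ℕ, x = a → y = b → ev a b e = ev x y (3 * d - x - y) := by
    intro x y hx hy; subst hx; subst hy; exact ev_inj.2 ⟨rfl, rfl, by omega⟩
  by_cases h2a : 2 ≤ a
  · rw [he a b rfl rfl]
    exact hX 1 b (Or.inl one_ne_zero) a (by omega) (by omega)
  · by_cases h1a : a = 1
    · subst h1a
      rw [he 1 b rfl rfl]
      exact hY 1 (b - 1) (Or.inl one_ne_zero) b (by omega) (by omega)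
    · have ha0 : a = 0 := by omega
      subst ha0
      rw [he 0 b rfl rfl]
      exact hY 0 1 (Or.inr one_ne_zero) b (by omega) (by omega)


/-- An element `f ∈ R_d` is invariant modulo `ℂ·Z^(3d)` under all the substitutions
`X ↦ X + αZ, Y ↦ Y + βZ, Z ↦ Z` if and only if it lies in the span of
`X Z^(3d-1)`, `Y Z^(3d-1)`, `Z^(3d)`. -/
theorem socle_one_of_blowup (d : ℕ) (hd : 1 ≤ d) (f : MvPolynomial (Fin 3) ℂ)
    (hf : f ∈ Rd d) :
    (∀ α β : ℂ, ∃ c : ℂ, unipAction α β f - f = c • X 2 ^ (3 * d)) ↔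
      f ∈ Submodule.span ℂ
        {X 0 * X 2 ^ (3 * d - 1), X 1 * X 2 ^ (3 * d - 1),
          (X 2 ^ (3 * d) : MvPolynomial (Fin 3) ℂ)} := by
  constructor
  · -- forward direction
    intro H
    have hvan := vanish hf H
    set c10 := coeff (ev 1 0 (3 * d - 1)) f with hc10
    set c01 := coeff (ev 0 1 (3 * d - 1)) f with hc01
    set c00 := coeff (ev 0 0 (3 * d)) f with hc00
    have hrep : f = monomial (ev 1 0 (3 * d - 1)) c10 + monomial (ev 0 1 (3 * d - 1)) c01
        + monomial (ev 0 0 (3 * d)) c00 := by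
      apply MvPolynomial.ext
      intro m
      simp only [coeff_add, coeff_monomial]
      by_cases h1 : ev 1 0 (3 * d - 1) = m
      · rw [if_pos h1, if_neg, if_neg, ← h1]
        · simp [hc10]
        · rw [← h1]; intro hc; have := ev_inj.1 hc; omega
        · rw [← h1]; intro hc; have := ev_inj.1 hc; omega
      · by_cases h2 : ev 0 1 (3 * d - 1) = m
        · rw [if_neg h1, if_pos h2, if_neg, ← h2]
          · simp [hc01]
          · rw [← h2]; intro hc; have := ev_inj.1 hc; omega
        · by_cases h3 : ev 0 0 (3 * d) = m
          · rw [if_neg h1, if_neg h2, if_pos h3, ← h3]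
            simp [hc00]
          · rw [if_neg h1, if_neg h2, if_neg h3]
            simp only [add_zero, zero_add]
            by_contra hne
            obtain ⟨a, b, e, hsum, rfl⟩ := supp_Rd hf m hne
            by_cases hab : 2 ≤ a + b
            · exact hne (hvan a b e hsum hab)
            · have hcase : (a = 0 ∧ b = 0) ∨ (a = 1 ∧ b = 0) ∨ (a = 0 ∧ b = 1) := by omega
              rcases hcase with ⟨rfl, rfl⟩ | ⟨rfl, rfl⟩ | ⟨rfl, rfl⟩
              · exact h3 (ev_inj.2 ⟨rfl, rfl, by omega⟩)
              · exact h1 (ev_inj.2 ⟨rfl, rfl, by omega⟩)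
              · exact h2 (ev_inj.2 ⟨rfl, rfl, by omega⟩)
    rw [hrep]
    have e1 : monomial (ev 1 0 (3 * d - 1)) c10
        = c10 • (X 0 * X 2 ^ (3 * d - 1) : MvPolynomial (Fin 3) ℂ) := by
      rw [monomial_ev, smul_eq_C_mul]; ring
    have e2 : monomial (ev 0 1 (3 * d - 1)) c01
        = c01 • (X 1 * X 2 ^ (3 * d - 1) : MvPolynomial (Fin 3) ℂ) := by
      rw [monomial_ev, smul_eq_C_mul]; ring
    have e3 : monomial (ev 0 0 (3 * d)) c00
        = c00 • (X 2 ^ (3 * d) : MvPolynomial (Fin 3) ℂ) := by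
      rw [monomial_ev, smul_eq_C_mul]; ring
    rw [e1, e2, e3]
    refine add_mem (add_mem ?_ ?_) ?_ <;>
      refine Submodule.smul_mem _ _ (Submodule.subset_span ?_)
    · exact Or.inl rfl
    · exact Or.inr (Or.inl rfl)
    · exact Or.inr (Or.inr rfl)
  · -- reverse direction
    intro hmem α β
    have key : Submodule.span ℂ
          {X 0 * X 2 ^ (3 * d - 1), X 1 * X 2 ^ (3 * d - 1),
            (X 2 ^ (3 * d) : MvPolynomial (Fin 3) ℂ)} ≤
        Submodule.comap ((unipAction α β).toLinearMap - LinearMap.id)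
          (Submodule.span ℂ {(X 2 ^ (3 * d) : MvPolynomial (Fin 3) ℂ)}) := by
      rw [Submodule.span_le]
      have h3d : 3 * d - 1 + 1 = 3 * d := by omega
      rintro g (rfl | rfl | rfl) <;>
        simp only [SetLike.mem_coe, Submodule.mem_comap, LinearMap.sub_apply,
          AlgHom.toLinearMap_apply, LinearMap.id_apply]
      · have : unipAction α β (X 0 * X 2 ^ (3 * d - 1)) - X 0 * X 2 ^ (3 * d - 1)
            = α • (X 2 ^ (3 * d) : MvPolynomial (Fin 3) ℂ) := by
          rw [← h3d]
          simp only [unipAction, map_mul, map_pow, aeval_X]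
          rw [smul_eq_C_mul]
          norm_num [Matrix.cons_val_zero, Matrix.cons_val_one, Matrix.cons_val_two, Matrix.tail_cons, Matrix.head_cons]
          ring
        rw [this]
        exact Submodule.smul_mem _ _ (Submodule.subset_span rfl)
      · have : unipAction α β (X 1 * X 2 ^ (3 * d - 1)) - X 1 * X 2 ^ (3 * d - 1)
            = β • (X 2 ^ (3 * d) : MvPolynomial (Fin 3) ℂ) := by
          rw [← h3d]
          simp only [unipAction, map_mul, map_pow, aeval_X]
          rw [smul_eq_C_mul]
          norm_num [Matrix.cons_val_zero, Matrix.cons_val_one, Matrix.cons_val_two, Matrix.tail_cons, Matrix.head_cons]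
          ring
        rw [this]
        exact Submodule.smul_mem _ _ (Submodule.subset_span rfl)
      · have : unipAction α β (X 2 ^ (3 * d) : MvPolynomial (Fin 3) ℂ) - X 2 ^ (3 * d) = 0 := by
          simp [unipAction]
        rw [this]
        exact Submodule.zero_mem _
    have h := key hmem
    simp only [Submodule.mem_comap, LinearMap.sub_apply, AlgHom.toLinearMap_apply,
      LinearMap.id_apply] at h
    obtain ⟨c, hc⟩ := Submodule.mem_span_singleton.1 h
    exact ⟨c, hc.symm⟩
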